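/- For every x ∈ ℝⁿ, the sum over all sets T of (k+1)-element subsets of [n] with |T| = m3 of det(∂̂_{•,T})² · ∏_{i∈[n]} (x_i²)^{d_i(T)} equals (Σ_{i∈[n]} x_i²)^{m2} · ∏_{i∈[n]} (x_i²)^{m1}. (This is Kalai's generating-function theorem: the terms with det ∂̂_{•,T} ≠ 0 are exactly the ℚ-acyclic complexes T, weighted by the square of the order of their torsion groups.) -/

import Mathlib

open Matrix

/-- The `j`-element subsets of the vertex set `[n]` (modelled as `Fin n`). -/
abbrev Face (n j : ℕ) := {s : Finset (Fin n) // s.card = j}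

/-- The `j`-element subsets of `[n]` not containing the last vertex `n`
(the vertex of `Fin n` with value `n - 1`). -/
abbrev HFace (n j : ℕ) :=
  {s : Finset (Fin n) // s.card = j ∧ ∀ a ∈ s, (a : ℕ) < n - 1}

/-- The `k`-dimensional boundary matrix `∂`: rows indexed by `k`-subsets `σ`,
columns by `(k+1)`-subsets `τ`; the entry is `(-1)^m` if `σ = τ \ {τ_m}`
(where `τ = {τ_0 < ⋯ < τ_k}`), and `0` otherwise. -/
noncomputable def bdry (n k : ℕ) : Matrix (Face n k) (Face n (k+1)) ℝ :=
  fun σ τ => ∑ a ∈ τ.1,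
    if σ.1 = τ.1.erase a then (-1 : ℝ) ^ ((τ.1.filter (fun b => b < a)).card) else 0

/-- The submatrix `∂̂` of `∂` consisting of the rows indexed by `k`-subsets
not containing the vertex `n`. -/
noncomputable def bdryHat (n k : ℕ) : Matrix (HFace n k) (Face n (k+1)) ℝ :=
  fun σ τ => bdry n k ⟨σ.1, σ.2.1⟩ τ

/-- The submatrix `M_{•,T}` of `M` with columns restricted to `T`. -/
def colSub {ι κ : Type*} (M : Matrix ι κ ℝ) (T : Finset κ) :
    Matrix ι {τ // τ ∈ T} ℝ :=
  fun i t => M i t.1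

/- The squared determinant of a matrix whose row and column index types are in
bijection (`0` if there is no bijection); independent of the chosen bijection. -/
open scoped Classical in
noncomputable def detSq {ι κ : Type*} [Fintype ι] [DecidableEq ι] [Fintype κ]
    (M : Matrix ι κ ℝ) : ℝ :=
  if h : Nonempty (ι ≃ κ) then ((M.submatrix id h.some).det) ^ 2 else 0

/-- The degree `d_i(T)`: the number of members of `T` containing the vertex `i`. -/
def deg (n k : ℕ) (T : Finset (Face n (k+1))) (i : Fin n) : ℕ :=
  (T.filter (fun τ => i ∈ τ.1)).card

/-- The diagonal matrix `X_j` indexed by `j`-subsets, with entries `∏_{i∈σ} x_i`. -/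
noncomputable def Xdiag (n j : ℕ) (x : Fin n → ℝ) :
    Matrix (Face n j) (Face n j) ℝ :=
  Matrix.diagonal (fun σ => ∏ i ∈ σ.1, x i)
namespace Kalai
open Finset

variable {n : ℕ}

noncomputable def ent (σ τ : Finset (Fin n)) : ℝ :=
  ∑ a ∈ τ, if σ = τ.erase a then (-1 : ℝ) ^ ((τ.filter (fun b => b < a)).card) else 0

lemma ent_eq_zero {σ τ : Finset (Fin n)} (h : ¬ σ ⊆ τ) : ent σ τ = 0 := by
  apply Finset.sum_eq_zero; intro a ha
  rw [if_neg]; rintro rfl; exact h (erase_subset _ _)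

lemma ent_erase {τ : Finset (Fin n)} {a : Fin n} (ha : a ∈ τ) :
    ent (τ.erase a) τ = (-1 : ℝ) ^ ((τ.filter (fun b => b < a)).card) := by
  rw [ent, Finset.sum_eq_single_of_mem a ha (fun b hb hba => ?_), if_pos rfl]
  rw [if_neg fun h => hba (((Finset.erase_inj τ ha).mp h).symm)]

lemma ent_insert {σ : Finset (Fin n)} {a : Fin n} (ha : a ∉ σ) :
    ent σ (insert a σ) = (-1 : ℝ) ^ ((σ.filter (fun b => b < a)).card) := by
  have h1 : σ = (insert a σ).erase a := (erase_insert ha).symm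
  have h2 := ent_erase (τ := insert a σ) (a := a) (mem_insert_self a σ)
  rw [← h1] at h2
  rw [h2, filter_insert, if_neg (lt_irrefl a)]

lemma exists_insert_rep {σ τ : Finset (Fin n)} (hsub : σ ⊆ τ) (hc : σ.card + 1 = τ.card) :
    ∃ a, a ∉ σ ∧ τ = insert a σ := by
  have h1 : (τ \ σ).card = 1 := by rw [card_sdiff_of_subset hsub]; omega
  obtain ⟨a, ha⟩ := card_eq_one.mp h1
  have haτ : a ∈ τ ∧ a ∉ σ := by
    have := ha ▸ mem_singleton_self a; simpa using (mem_sdiff.mp this)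
  refine ⟨a, haτ.2, (eq_of_subset_of_card_le (insert_subset haτ.1 hsub) ?_).symm⟩
  rw [card_insert_of_notMem haτ.2]; omega

lemma ent_mul_self {σ τ : Finset (Fin n)} (hc : σ.card + 1 = τ.card) :
    ent σ τ * ent σ τ = if σ ⊆ τ then 1 else 0 := by
  by_cases h : σ ⊆ τ
  · obtain ⟨a, ha, rfl⟩ := exists_insert_rep h hc
    rw [ent_insert ha, if_pos h, ← pow_add, ← two_mul, pow_mul]
    norm_num
  · rw [ent_eq_zero h, if_neg h, mul_zero]


lemma filter_lt_erase_gt {τ : Finset (Fin n)} {a b : Fin n} (hab : a < b) :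
    ((τ.erase b).filter (fun c => c < a)).card = (τ.filter (fun c => c < a)).card := by
  rw [filter_erase, erase_eq_of_notMem]
  simp only [mem_filter, not_and]
  exact fun _ h => absurd (h.trans hab) (lt_irrefl b)

lemma filter_lt_erase_lt {τ : Finset (Fin n)} {a b : Fin n} (ha : a ∈ τ) (hab : a < b) :
    ((τ.erase a).filter (fun c => c < b)).card = (τ.filter (fun c => c < b)).card - 1 := by
  rw [filter_erase, card_erase_of_mem (s := τ.filter (fun c => c < b)) (mem_filter.mpr ⟨ha, hab⟩)]

lemma sign_pair {τ : Finset (Fin n)} {a b : Fin n} (ha : a ∈ τ) (hb : b ∈ τ) (hab : a < b) :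
    ent ((τ.erase b).erase a) (τ.erase b) * ent (τ.erase b) τ
    + ent ((τ.erase a).erase b) (τ.erase a) * ent (τ.erase a) τ = 0 := by
  rw [ent_erase (mem_erase_of_ne_of_mem hab.ne ha), ent_erase hb,
    ent_erase (mem_erase_of_ne_of_mem hab.ne' hb), ent_erase ha,
    filter_lt_erase_gt hab, filter_lt_erase_lt ha hab]
  have hq : 1 ≤ (τ.filter (fun c => c < b)).card :=
    card_pos.mpr ⟨a, mem_filter.mpr ⟨ha, hab⟩⟩
  obtain ⟨q, hqq⟩ : ∃ q, (τ.filter (fun c => c < b)).card = q + 1 :=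
    ⟨_, (Nat.succ_pred_eq_of_pos hq).symm⟩
  rw [hqq]
  simp only [Nat.add_sub_cancel, pow_succ]
  ring

lemma ent_comp (j : ℕ) {ρ τ : Finset (Fin n)} (hρ : ρ.card = j) (hτ : τ.card = j + 2) :
    ∑ σ ∈ τ.powersetCard (j+1), ent ρ σ * ent σ τ = 0 := by
  by_cases hsub : ρ ⊆ τ
  · have h2 : (τ \ ρ).card = 2 := by rw [card_sdiff_of_subset hsub]; omega
    obtain ⟨a, b, hab, hab2⟩ := card_eq_two.mp h2
    have haτ : a ∈ τ ∧ a ∉ ρ := by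
      have : a ∈ τ \ ρ := hab2 ▸ (by simp); simpa using this
    have hbτ : b ∈ τ ∧ b ∉ ρ := by
      have : b ∈ τ \ ρ := hab2 ▸ (by simp); simpa using this
    have hρab : ρ = (τ.erase b).erase a := by
      have h1 : ρ = τ \ {a, b} := by
        rw [← hab2, sdiff_sdiff_self_left]
        exact (inf_eq_right.mpr hsub).symm
      rw [h1, show ({a, b} : Finset (Fin n)) = insert a {b} from rfl, sdiff_insert,
        Finset.sdiff_singleton_eq_erase]
    have hρba : ρ = (τ.erase a).erase b := by rw [hρab, erase_right_comm]
    have hermem : ∀ c ∈ τ, τ.erase c ∈ τ.powersetCard (j+1) := by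
      intro c hc
      rw [mem_powersetCard]
      exact ⟨erase_subset _ _, by rw [card_erase_of_mem hc]; omega⟩
    have hne : τ.erase b ≠ τ.erase a := fun h =>
      hab (((Finset.erase_inj τ hbτ.1).mp h).symm)
    have hzero : ∀ σ ∈ τ.powersetCard (j+1), σ ∉ ({τ.erase b, τ.erase a} : Finset (Finset (Fin n)))
        → ent ρ σ * ent σ τ = 0 := by
      intro σ hσ hσne
      rw [mem_powersetCard] at hσ
      by_cases hρσ : ρ ⊆ σ
      · obtain ⟨c, hc, rfl⟩ := exists_insert_rep hρσ (by omega)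
        have hcab : c ∈ τ \ ρ := mem_sdiff.mpr ⟨hσ.1 (mem_insert_self c ρ), hc⟩
        rw [hab2, mem_insert, mem_singleton] at hcab
        exfalso; apply hσne
        rcases hcab with rfl | rfl
        · have h3 : insert c ρ = τ.erase b := by
            rw [hρab]; exact insert_erase (mem_erase_of_ne_of_mem hab haτ.1)
          rw [h3]; exact mem_insert_self _ _
        · have h3 : insert c ρ = τ.erase a := by
            rw [hρba]; exact insert_erase (mem_erase_of_ne_of_mem (Ne.symm hab) hbτ.1)
          rw [h3]; exact mem_insert_of_mem (mem_singleton_self _)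
      · rw [ent_eq_zero hρσ, zero_mul]
    rw [← Finset.sum_subset (insert_subset (hermem b hbτ.1)
        (singleton_subset_iff.mpr (hermem a haτ.1))) hzero,
      Finset.sum_pair hne]
    nth_rewrite 1 [hρab]
    nth_rewrite 1 [hρba]
    rcases hab.lt_or_gt with hlt | hlt
    · exact sign_pair haτ.1 hbτ.1 hlt
    · rw [add_comm]; exact sign_pair hbτ.1 haτ.1 hlt
  · apply Finset.sum_eq_zero
    intro σ hσ
    rw [mem_powersetCard] at hσ
    by_cases hρσ : ρ ⊆ σ
    · rw [ent_eq_zero (fun h => hsub (hρσ.trans hσ.1)), zero_mul]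
    · rw [ent_eq_zero hρσ, zero_mul]


/-- The allowed vertex set: all vertices except the last one. -/
def Av (n : ℕ) : Finset (Fin n) := Finset.univ.filter (fun i : Fin n => (i : ℕ) < n - 1)

/-- The `j`-subsets of `Av n`, as a `Finset`. -/
def hf (n j : ℕ) : Finset (Finset (Fin n)) := (Av n).powersetCard j

lemma mem_hf {j : ℕ} {s : Finset (Fin n)} :
    s ∈ hf n j ↔ s.card = j ∧ ∀ a ∈ s, (a : ℕ) < n - 1 := by
  simp only [hf, mem_powersetCard, Av, subset_iff, mem_filter, mem_univ, true_and, and_comm]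

lemma card_Av (hn : 1 ≤ n) : (Av n).card = n - 1 := by
  have : Av n = Finset.univ.erase ⟨n - 1, by omega⟩ := by
    ext i
    simp only [Av, mem_filter, mem_univ, true_and, mem_erase, and_true, ← Fin.val_ne_iff]
    have h1 := i.isLt
    have h2 : ((⟨n-1, by omega⟩ : Fin n) : ℕ) = n - 1 := rfl
    omega
  rw [this, card_erase_of_mem (mem_univ _), card_univ, Fintype.card_fin]

lemma card_hf (hn : 1 ≤ n) (j : ℕ) : (hf n j).card = (n-1).choose j := by
  rw [hf, card_powersetCard, card_Av hn]

lemma sum_hface (j : ℕ) (f : Finset (Fin n) → ℝ) :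
    ∑ σ : HFace n j, f σ.1 = ∑ s ∈ hf n j, f s :=
  (Finset.sum_subtype _ (fun s => mem_hf) f).symm

lemma prod_hface (j : ℕ) (f : Finset (Fin n) → ℝ) :
    ∏ σ : HFace n j, f σ.1 = ∏ s ∈ hf n j, f s :=
  (Finset.prod_subtype _ (fun s => mem_hf) f).symm

lemma card_hface (hn : 1 ≤ n) (j : ℕ) : Fintype.card (HFace n j) = (n-1).choose j := by
  rw [Fintype.card_subtype, ← card_hf hn j]
  congr 1
  ext s
  simp [mem_hf]

/-- reindex sums over `(j+1)`-faces containing `σ` by the new vertex -/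
lemma sum_up {j : ℕ} {σ : Finset (Fin n)} (hσ : σ ∈ hf n j) (f : Finset (Fin n) → ℝ)
    (hf0 : ∀ τ ∈ hf n (j+1), ¬ σ ⊆ τ → f τ = 0) :
    ∑ τ ∈ hf n (j+1), f τ = ∑ a ∈ Av n \ σ, f (insert a σ) := by
  rw [← Finset.sum_filter_of_ne (p := fun τ => σ ⊆ τ) (fun τ hτ hne => by
    by_contra h; exact hne (hf0 τ hτ h))]
  refine (Finset.sum_bij (fun (a : Fin n) (ha : a ∈ Av n \ σ) => insert a σ) ?_ ?_ ?_ ?_).symm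
  · intro a ha
    rw [mem_sdiff] at ha
    rw [mem_filter, mem_hf]
    rw [mem_hf] at hσ
    refine ⟨⟨?_, ?_⟩, subset_insert _ _⟩
    · rw [card_insert_of_notMem ha.2, hσ.1]
    · intro c hc
      rcases mem_insert.mp hc with rfl | hc
      · simpa [Av] using ha.1
      · exact hσ.2 c hc
  · intro a ha b hb hab
    rw [mem_sdiff] at ha hb
    exact (Finset.insert_inj ha.2).mp hab
  · intro τ hτ
    rw [mem_filter, mem_hf] at hτ
    obtain ⟨a, ha, rfl⟩ := exists_insert_rep hτ.2 (by rw [mem_hf] at hσ; omega)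
    refine ⟨a, mem_sdiff.mpr ⟨?_, ha⟩, rfl⟩
    simp only [Av, mem_filter, mem_univ, true_and]
    exact hτ.1.2 a (mem_insert_self a σ)
  · intros; rfl

/-- reindex sums over `(j-1)`-faces contained in `σ` by the removed vertex -/
lemma sum_down {j : ℕ} {σ : Finset (Fin n)} (hσ : σ ∈ hf n (j+1)) (f : Finset (Fin n) → ℝ)
    (hf0 : ∀ ρ ∈ hf n j, ¬ ρ ⊆ σ → f ρ = 0) :
    ∑ ρ ∈ hf n j, f ρ = ∑ a ∈ σ, f (σ.erase a) := by
  rw [← Finset.sum_filter_of_ne (p := fun ρ => ρ ⊆ σ) (fun ρ hρ hne => by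
    by_contra h; exact hne (hf0 ρ hρ h))]
  refine (Finset.sum_bij (fun (a : Fin n) (ha : a ∈ σ) => σ.erase a) ?_ ?_ ?_ ?_).symm
  · intro a ha
    rw [mem_hf] at hσ
    rw [mem_filter, mem_hf]
    refine ⟨⟨?_, fun c hc => hσ.2 c (erase_subset _ _ hc)⟩, erase_subset _ _⟩
    rw [card_erase_of_mem ha, hσ.1]
    omega
  · intro a ha b hb hab
    exact (Finset.erase_inj σ ha).mp hab
  · intro ρ hρ
    rw [mem_filter, mem_hf] at hρ
    obtain ⟨a, ha, hins⟩ := exists_insert_rep hρ.2 (by rw [mem_hf] at hσ; omega)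
    subst hins
    exact ⟨a, mem_insert_self a ρ, erase_insert ha⟩
  · intros; rfl


section Weighted

variable (x : Fin n → ℝ)

noncomputable def wt (s : Finset (Fin n)) : ℝ := ∏ i ∈ s, x i

noncomputable def nent (σ τ : Finset (Fin n)) : ℝ := (wt x σ)⁻¹ * ent σ τ * wt x τ

variable {x}

lemma wt_ne (hx : ∀ i, x i ≠ 0) (s : Finset (Fin n)) : wt x s ≠ 0 :=
  prod_ne_zero_iff.mpr fun i _ => hx i

lemma wt_insert {a : Fin n} {s : Finset (Fin n)} (ha : a ∉ s) :
    wt x (insert a s) = x a * wt x s := prod_insert ha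

lemma nent_zero {σ τ : Finset (Fin n)} (h : ¬ σ ⊆ τ) : nent x σ τ = 0 := by
  rw [nent, ent_eq_zero h, mul_zero, zero_mul]

lemma nent_insert (hx : ∀ i, x i ≠ 0) {σ : Finset (Fin n)} {a : Fin n} (ha : a ∉ σ) :
    nent x σ (insert a σ) = (-1 : ℝ) ^ ((σ.filter (fun b => b < a)).card) * x a := by
  rw [nent, ent_insert ha, wt_insert ha]
  field_simp [wt_ne hx]

lemma neg_pow_sq (p : ℕ) : ((-1 : ℝ) ^ p) ^ 2 = 1 := by
  rw [← pow_mul, mul_comm, pow_mul]; norm_num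

/-- diagonal of the up Laplacian -/
lemma up_diag (hx : ∀ i, x i ≠ 0) {j : ℕ} {σ : Finset (Fin n)} (hσ : σ ∈ hf n (j+1)) :
    ∑ τ ∈ hf n (j+2), nent x σ τ ^ 2 = ∑ a ∈ Av n \ σ, x a ^ 2 := by
  rw [show j + 2 = (j+1) + 1 from rfl,
    sum_up hσ _ (fun τ _ h => by rw [nent_zero h]; norm_num)]
  refine Finset.sum_congr rfl (fun a ha => ?_)
  rw [nent_insert hx (mem_sdiff.mp ha).2, mul_pow, neg_pow_sq, one_mul]

/-- diagonal of the down Laplacian -/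
lemma down_diag (hx : ∀ i, x i ≠ 0) {j : ℕ} {σ : Finset (Fin n)} (hσ : σ ∈ hf n (j+1)) :
    ∑ ρ ∈ hf n j, nent x ρ σ ^ 2 = ∑ a ∈ σ, x a ^ 2 := by
  rw [sum_down hσ _ (fun ρ _ h => by rw [nent_zero h]; norm_num)]
  refine Finset.sum_congr rfl (fun a ha => ?_)
  have h1 : σ = insert a (σ.erase a) := (insert_erase ha).symm
  nth_rewrite 2 [h1]
  rw [nent_insert hx (notMem_erase a σ), mul_pow, neg_pow_sq, one_mul]

lemma subset_Av {j : ℕ} {σ : Finset (Fin n)} (hσ : σ ∈ hf n j) : σ ⊆ Av n := by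
  rw [mem_hf] at hσ
  intro a ha
  simp only [Av, mem_filter, mem_univ, true_and]
  exact hσ.2 a ha

lemma lap_diag (hx : ∀ i, x i ≠ 0) {j : ℕ} {σ : Finset (Fin n)} (hσ : σ ∈ hf n (j+1)) :
    (∑ τ ∈ hf n (j+2), nent x σ τ ^ 2) + (∑ ρ ∈ hf n j, nent x ρ σ ^ 2)
      = ∑ a ∈ Av n, x a ^ 2 := by
  rw [up_diag hx hσ, down_diag hx hσ, Finset.sum_sdiff (subset_Av hσ)]

lemma lap_off (hx : ∀ i, x i ≠ 0) {j : ℕ} {σ σ' : Finset (Fin n)}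
    (hσ : σ ∈ hf n (j+1)) (hσ' : σ' ∈ hf n (j+1)) (hne : σ ≠ σ') :
    (∑ τ ∈ hf n (j+2), nent x σ τ * nent x σ' τ)
    + (∑ ρ ∈ hf n j, nent x ρ σ * nent x ρ σ') = 0 := by
  have hcσ := (mem_hf.mp hσ).1
  have hcσ' := (mem_hf.mp hσ').1
  have hlt : (σ ∩ σ').card < j + 1 := by
    rcases lt_or_eq_of_le (card_le_card (inter_subset_left : σ ∩ σ' ⊆ σ)) with h | h
    · omega
    · exfalso
      have h1 : σ ∩ σ' = σ := eq_of_subset_of_card_le (inter_subset_left : σ ∩ σ' ⊆ σ) (by omega)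
      have h2 : σ ⊆ σ' := by rw [← h1]; exact inter_subset_right
      exact hne (eq_of_subset_of_card_le h2 (by omega))
  by_cases hj : (σ ∩ σ').card = j
  · -- exactly one exchanged vertex
    obtain ⟨a, haρ, hσa⟩ := exists_insert_rep (inter_subset_left : σ ∩ σ' ⊆ σ)
      (by omega)
    obtain ⟨b, hbρ, hσb⟩ := exists_insert_rep (inter_subset_right : σ ∩ σ' ⊆ σ')
      (by omega)
    set ρ0 := σ ∩ σ' with hρ0
    have haσ : a ∈ σ := hσa ▸ mem_insert_self a ρ0
    have hbσ' : b ∈ σ' := hσb ▸ mem_insert_self b ρ0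
    have haσ' : a ∉ σ' := fun h => haρ (mem_inter.mpr ⟨haσ, h⟩)
    have hbσ : b ∉ σ := fun h => hbρ (mem_inter.mpr ⟨h, hbσ'⟩)
    have hab : a ≠ b := fun h => haσ' (h ▸ hbσ')
    have hτeq : insert b σ = insert a σ' := by
      rw [hσa, hσb, Finset.insert_comm]
    have hτmem : insert b σ ∈ hf n (j+2) := by
      rw [mem_hf]
      constructor
      · rw [card_insert_of_notMem hbσ]; omega
      · intro c hc
        rcases mem_insert.mp hc with rfl | hc
        · exact (mem_hf.mp hσ').2 c hbσ'
        · exact (mem_hf.mp hσ).2 c hc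
    have hup : ∑ τ ∈ hf n (j+2), nent x σ τ * nent x σ' τ
        = nent x σ (insert b σ) * nent x σ' (insert b σ) := by
      apply Finset.sum_eq_single_of_mem _ hτmem
      intro τ hτ hτne
      by_cases h1 : σ ⊆ τ
      · by_cases h2 : σ' ⊆ τ
        · exfalso
          apply hτne
          apply (eq_of_subset_of_card_le (insert_subset (h2 hbσ') h1) ?_).symm
          · rw [(mem_hf.mp hτ).1, card_insert_of_notMem hbσ]; omega
        · rw [nent_zero h2, mul_zero]
      · rw [nent_zero h1, zero_mul]
    have hdown : ∑ ρ ∈ hf n j, nent x ρ σ * nent x ρ σ'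
        = nent x ρ0 σ * nent x ρ0 σ' := by
      apply Finset.sum_eq_single_of_mem
      · rw [mem_hf]
        exact ⟨hj, fun c hc => (mem_hf.mp hσ).2 c (inter_subset_left hc)⟩
      · intro ρ hρ hρne
        by_cases h1 : ρ ⊆ σ
        · by_cases h2 : ρ ⊆ σ'
          · have hcρ := (mem_hf.mp hρ).1
            exact absurd (eq_of_subset_of_card_le (subset_inter h1 h2)
              (le_of_eq (hj.trans hcρ.symm))) hρne
          · rw [nent_zero h2, mul_zero]
        · rw [nent_zero h1, zero_mul]
    have e1 : nent x σ (insert b σ) = (-1 : ℝ) ^ ((σ.filter (fun c => c < b)).card) * x b :=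
      nent_insert hx hbσ
    have e2 : nent x σ' (insert b σ) = (-1 : ℝ) ^ ((σ'.filter (fun c => c < a)).card) * x a := by
      rw [hτeq]; exact nent_insert hx haσ'
    have e3 : nent x ρ0 σ = (-1 : ℝ) ^ ((ρ0.filter (fun c => c < a)).card) * x a := by
      nth_rewrite 1 [hσa]; exact nent_insert hx haρ
    have e4 : nent x ρ0 σ' = (-1 : ℝ) ^ ((ρ0.filter (fun c => c < b)).card) * x b := by
      nth_rewrite 1 [hσb]; exact nent_insert hx hbρ
    have hq : a ∉ ρ0.filter (fun c => c < b) := fun h => haρ (mem_filter.mp h).1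
    have hp : b ∉ ρ0.filter (fun c => c < a) := fun h => hbρ (mem_filter.mp h).1
    rw [hup, hdown, e1, e2, e3, e4]
    rcases hab.lt_or_gt with hlt2 | hlt2
    · rw [hσa, filter_insert, if_pos hlt2, card_insert_of_notMem hq,
        hσb, filter_insert, if_neg (asymm hlt2), pow_succ]
      ring
    · rw [hσa, filter_insert, if_neg (asymm hlt2),
        hσb, filter_insert, if_pos hlt2, card_insert_of_notMem hp, pow_succ]
      ring
  · -- intersection too small : all terms vanish
    have h1 : ∑ τ ∈ hf n (j+2), nent x σ τ * nent x σ' τ = 0 := by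
      apply Finset.sum_eq_zero
      intro τ hτ
      by_cases hs : σ ⊆ τ
      · by_cases hs' : σ' ⊆ τ
        · exfalso
          have hu : σ ∪ σ' ⊆ τ := union_subset hs hs'
          have hcard := card_le_card hu
          rw [(mem_hf.mp hτ).1] at hcard
          have := card_union_add_card_inter σ σ'
          omega
        · rw [nent_zero hs', mul_zero]
      · rw [nent_zero hs, zero_mul]
    have h2 : ∑ ρ ∈ hf n j, nent x ρ σ * nent x ρ σ' = 0 := by
      apply Finset.sum_eq_zero
      intro ρ hρ
      by_cases hs : ρ ⊆ σ
      · by_cases hs' : ρ ⊆ σ'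
        · exfalso
          have := card_le_card (subset_inter hs hs')
          rw [(mem_hf.mp hρ).1] at this
          omega
        · rw [nent_zero hs', mul_zero]
      · rw [nent_zero hs, zero_mul]
    rw [h1, h2, add_zero]


lemma ent_comp_hf {j : ℕ} {ρ τ : Finset (Fin n)} (hρ : ρ ∈ hf n j) (hτ : τ ∈ hf n (j+2)) :
    ∑ σ ∈ hf n (j+1), ent ρ σ * ent σ τ = 0 := by
  rw [← Finset.sum_subset (s₁ := τ.powersetCard (j+1)) ?_ ?_]
  · exact ent_comp j (mem_hf.mp hρ).1 (mem_hf.mp hτ).1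
  · intro σ hσ
    rw [mem_powersetCard] at hσ
    rw [mem_hf]
    exact ⟨hσ.2, fun a ha => (mem_hf.mp hτ).2 a (hσ.1 ha)⟩
  · intro σ hσ hnot
    have h : ¬ σ ⊆ τ := fun h => hnot (mem_powersetCard.mpr ⟨h, (mem_hf.mp hσ).1⟩)
    rw [ent_eq_zero h, mul_zero]

lemma nent_comp (hx : ∀ i, x i ≠ 0) {j : ℕ} {ρ τ : Finset (Fin n)}
    (hρ : ρ ∈ hf n j) (hτ : τ ∈ hf n (j+2)) :
    ∑ σ ∈ hf n (j+1), nent x ρ σ * nent x σ τ = 0 := by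
  have h : ∀ σ ∈ hf n (j+1), nent x ρ σ * nent x σ τ
      = (wt x ρ)⁻¹ * wt x τ * (ent ρ σ * ent σ τ) := by
    intro σ _
    rw [nent, nent]
    field_simp [wt_ne hx]
  rw [Finset.sum_congr rfl h, ← Finset.mul_sum, ent_comp_hf hρ hτ, mul_zero]

end Weighted

section Matrices

variable (n j : ℕ) (x : Fin n → ℝ)

noncomputable def NU : Matrix (HFace n (j+1)) (HFace n (j+2)) ℝ :=
  fun σ τ => nent x σ.1 τ.1

noncomputable def ND : Matrix (HFace n j) (HFace n (j+1)) ℝ :=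
  fun ρ σ => nent x ρ.1 σ.1

variable {n j x}

lemma mem_hf_of_hface {j : ℕ} (σ : HFace n j) : σ.1 ∈ hf n j := mem_hf.mpr σ.2

lemma lap_matrix (hx : ∀ i, x i ≠ 0) :
    NU n j x * (NU n j x)ᵀ + (ND n j x)ᵀ * ND n j x
      = (∑ a ∈ Av n, x a ^ 2) • (1 : Matrix (HFace n (j+1)) (HFace n (j+1)) ℝ) := by
  ext σ σ'
  simp only [Matrix.add_apply, Matrix.mul_apply, Matrix.transpose_apply, Matrix.smul_apply,
    Matrix.one_apply, smul_eq_mul, NU, ND]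
  rw [sum_hface (n := n) (j+2) (fun s => nent x σ.1 s * nent x σ'.1 s),
    sum_hface (n := n) j (fun s => nent x s σ.1 * nent x s σ'.1)]
  by_cases h : σ = σ'
  · subst h
    rw [if_pos rfl, mul_one]
    simpa only [pow_two] using lap_diag hx (mem_hf_of_hface σ)
  · rw [if_neg h, mul_zero]
    exact lap_off hx (mem_hf_of_hface σ) (mem_hf_of_hface σ')
      (fun hh => h (Subtype.ext hh))

lemma NDNU (hx : ∀ i, x i ≠ 0) : ND n j x * NU n j x = 0 := by
  ext ρ τ
  simp only [Matrix.mul_apply, Matrix.zero_apply, ND, NU]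
  rw [sum_hface (n := n) (j+1) (fun s => nent x ρ.1 s * nent x s τ.1)]
  exact nent_comp hx (mem_hf_of_hface ρ) (mem_hf_of_hface τ)

lemma MA_sq (hx : ∀ i, x i ≠ 0) :
    (NU n j x * (NU n j x)ᵀ) * (NU n j x * (NU n j x)ᵀ)
      = (∑ a ∈ Av n, x a ^ 2) • (NU n j x * (NU n j x)ᵀ) := by
  have h1 : (ND n j x)ᵀ * ND n j x
      = (∑ a ∈ Av n, x a ^ 2) • 1 - NU n j x * (NU n j x)ᵀ :=
    eq_sub_of_add_eq' (lap_matrix hx)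
  have h2 : (NU n j x * (NU n j x)ᵀ) * ((ND n j x)ᵀ * ND n j x) = 0 := by
    rw [Matrix.mul_assoc, ← Matrix.mul_assoc (NU n j x)ᵀ, ← Matrix.transpose_mul,
      NDNU hx, Matrix.transpose_zero, Matrix.zero_mul, Matrix.mul_zero]
  have h3 := congrArg (fun M => (NU n j x * (NU n j x)ᵀ) * M) h1
  rw [h2, Matrix.mul_sub, Matrix.mul_smul, Matrix.mul_one] at h3
  exact (sub_eq_zero.mp h3.symm).symm

lemma count_mem_hf (hn : 2 ≤ n) {j : ℕ} {a : Fin n} (ha : a ∈ Av n) :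
    ((hf n (j+1)).filter (fun s => a ∈ s)).card = (n-2).choose j := by
  have hcard : ((Av n).erase a).card = n - 2 := by
    rw [card_erase_of_mem ha, card_Av (by omega)]; omega
  rw [← hcard, ← card_powersetCard]
  refine Finset.card_bij' (fun s _ => s.erase a) (fun t _ => insert a t) ?_ ?_ ?_ ?_
  · intro s hs
    rw [mem_filter] at hs
    rw [mem_powersetCard]
    refine ⟨?_, by rw [card_erase_of_mem hs.2, (mem_hf.mp hs.1).1]; omega⟩
    exact (erase_subset_erase a (subset_Av hs.1))
  · intro t ht
    rw [mem_powersetCard] at ht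
    have hat : a ∉ t := fun h => notMem_erase a (Av n) (ht.1 h)
    rw [mem_filter, mem_hf]
    refine ⟨⟨by rw [card_insert_of_notMem hat, ht.2], ?_⟩, mem_insert_self a t⟩
    intro c hc
    rcases mem_insert.mp hc with rfl | hc
    · simpa [Av] using ha
    · have : c ∈ Av n := erase_subset a (Av n) (ht.1 hc)
      simpa [Av] using this
  · intro s hs
    exact insert_erase (mem_filter.mp hs).2
  · intro t ht
    rw [mem_powersetCard] at ht
    exact erase_insert (fun h => notMem_erase a (Av n) (ht.1 h))

lemma trace_MA (hx : ∀ i, x i ≠ 0) (hn : 2 ≤ n) :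
    Matrix.trace (NU n j x * (NU n j x)ᵀ)
      = ((n-2).choose (j+1) : ℝ) * (∑ a ∈ Av n, x a ^ 2) := by
  rw [Matrix.trace]
  have h1 : ∀ σ : HFace n (j+1), (NU n j x * (NU n j x)ᵀ).diag σ
      = (∑ a ∈ Av n, x a ^ 2) - ∑ a ∈ σ.1, x a ^ 2 := by
    intro σ
    simp only [Matrix.diag_apply, Matrix.mul_apply, Matrix.transpose_apply, NU]
    rw [sum_hface (n := n) (j+2) (fun s => nent x σ.1 s * nent x σ.1 s)]
    have h2 : ∀ s ∈ hf n (j+2), nent x σ.1 s * nent x σ.1 s = nent x σ.1 s ^ 2 :=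
      fun s _ => (pow_two _).symm
    rw [Finset.sum_congr rfl h2, up_diag hx (mem_hf_of_hface σ),
      ← Finset.sum_sdiff (subset_Av (mem_hf_of_hface σ)) (f := fun a => x a ^ 2)]
    ring
  rw [Finset.sum_congr rfl (fun σ _ => h1 σ), Finset.sum_sub_distrib, Finset.sum_const,
    card_univ, card_hface (by omega) (j+1)]
  have h3 : ∑ σ : HFace n (j+1), ∑ a ∈ σ.1, x a ^ 2
      = ((n-2).choose j : ℝ) * (∑ a ∈ Av n, x a ^ 2) := by
    rw [sum_hface (n := n) (j+1) (fun s => ∑ a ∈ s, x a ^ 2)]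
    have h4 : ∀ s ∈ hf n (j+1), ∑ a ∈ s, x a ^ 2
        = ∑ a ∈ Av n, (if a ∈ s then x a ^ 2 else 0) := by
      intro s hs
      rw [Finset.sum_ite_mem]
      congr 1
      rw [Finset.inter_eq_right.mpr (subset_Av hs)]
    rw [Finset.sum_congr rfl h4, Finset.sum_comm]
    rw [Finset.mul_sum]
    refine Finset.sum_congr rfl (fun a ha => ?_)
    rw [Finset.sum_ite, Finset.sum_const_zero, add_zero, Finset.sum_const, nsmul_eq_mul,
      count_mem_hf hn ha]
  rw [h3]
  have hpas : (n-1).choose (j+1) = (n-2).choose (j+1) + (n-2).choose j := by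
    obtain ⟨m, rfl⟩ : ∃ m, n = m + 2 := ⟨n - 2, by omega⟩
    simp only [Nat.add_sub_cancel, show m + 2 - 1 = m + 1 from rfl]
    rw [Nat.choose_succ_succ]
    simp only [Nat.succ_eq_add_one]
    omega
  rw [hpas]
  push_cast
  ring

end Matrices


section Spectral

lemma det_add_smul_one {I : Type*} [Fintype I] [DecidableEq I]
    {A : Matrix I I ℝ} (hA : A.IsHermitian) {c : ℝ}
    (hAA : A * A = c • A) {m : ℕ} (hc : c ≠ 0) (htr : A.trace = (m : ℝ) * c) (t : ℝ) :
    (A + t • 1).det = (c + t) ^ m * t ^ (Fintype.card I - m) := by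
  classical
  set U : Matrix I I ℝ := (hA.eigenvectorUnitary : Matrix I I ℝ) with hUdef
  set μ : I → ℝ := hA.eigenvalues with hμdef
  have hUU : U * star U = 1 := (Matrix.mem_unitaryGroup_iff).mp hA.eigenvectorUnitary.2
  have hUU' : star U * U = 1 := (Matrix.mem_unitaryGroup_iff').mp hA.eigenvectorUnitary.2
  have hspec : A = U * Matrix.diagonal μ * star U := by
    have h := hA.spectral_theorem
    rwa [RCLike.ofReal_real_eq_id, Function.id_comp] at h
  -- eigenvalues satisfy the quadratic equation
  have hq : ∀ i, μ i = 0 ∨ μ i = c := by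
    intro i
    have h1 : (A * A) *ᵥ ⇑(hA.eigenvectorBasis i) = (μ i * μ i) • ⇑(hA.eigenvectorBasis i) := by
      rw [← Matrix.mulVec_mulVec, hA.mulVec_eigenvectorBasis, Matrix.mulVec_smul,
        hA.mulVec_eigenvectorBasis, smul_smul]
    rw [hAA, Matrix.smul_mulVec, hA.mulVec_eigenvectorBasis, smul_smul] at h1
    have hv : ⇑(hA.eigenvectorBasis i) ≠ 0 := by
      have h2 := (hA.eigenvectorBasis).orthonormal.ne_zero i
      intro h3
      apply h2
      ext w
      exact congrFun h3 w
    have h4 : (c * μ i - μ i * μ i) • ⇑(hA.eigenvectorBasis i) = 0 := by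
      rw [sub_smul, h1, sub_self]
    rcases smul_eq_zero.mp h4 with h5 | h5
    · rcases eq_or_ne (μ i) 0 with h7 | h7
      · exact Or.inl h7
      · have h8 : c * μ i = μ i * μ i := by linarith
        exact Or.inr (mul_right_cancel₀ h7 h8).symm
    · exact absurd h5 hv
  -- conjugation form of A + t • 1
  have hconj : A + t • 1 = U * Matrix.diagonal (fun i => μ i + t) * star U := by
    have h1 : (Matrix.diagonal (fun i => μ i + t) : Matrix I I ℝ)
        = Matrix.diagonal μ + t • 1 := by
      ext i j
      rcases eq_or_ne i j with rfl | hij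
      · simp [Matrix.one_apply_eq]
      · simp [Matrix.diagonal_apply_ne _ hij, Matrix.one_apply_ne hij]
    rw [h1, Matrix.mul_add, Matrix.add_mul, ← hspec, Matrix.mul_smul, Matrix.smul_mul,
      Matrix.mul_one, hUU]
  -- determinant
  have hdet : (A + t • 1).det = ∏ i, (μ i + t) := by
    have h2 : U.det * (star U).det = 1 := by rw [← Matrix.det_mul, hUU, Matrix.det_one]
    rw [hconj, Matrix.det_mul, Matrix.det_mul, Matrix.det_diagonal, mul_right_comm, h2, one_mul]
  -- trace
  have htrace : A.trace = ∑ i, μ i := by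
    rw [hspec, Matrix.trace_mul_cycle, hUU', Matrix.one_mul, Matrix.trace_diagonal]
  -- counting
  set P := Finset.univ.filter (fun i => μ i = c) with hP
  have hsum : ∑ i, μ i = (P.card : ℝ) * c := by
    rw [← Finset.sum_filter_add_sum_filter_not Finset.univ (fun i => μ i = c)]
    rw [Finset.sum_congr rfl (fun i hi => (Finset.mem_filter.mp hi).2),
      Finset.sum_const, nsmul_eq_mul]
    have h0 : ∑ i ∈ Finset.univ.filter (fun i => ¬ μ i = c), μ i = 0 :=
      Finset.sum_eq_zero (fun i hi => (hq i).resolve_right (Finset.mem_filter.mp hi).2)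
    rw [h0, add_zero]
  have hm : P.card = m := by
    have h1 : (P.card : ℝ) * c = (m : ℝ) * c := by rw [← hsum, ← htrace, htr]
    exact_mod_cast mul_right_cancel₀ hc h1
  have hprod : ∏ i, (μ i + t) = (c + t) ^ m * t ^ (Fintype.card I - m) := by
    rw [← Finset.prod_filter_mul_prod_filter_not Finset.univ (fun i => μ i = c)]
    have e1 : ∏ i ∈ P, (μ i + t) = (c + t) ^ P.card := by
      rw [Finset.prod_congr rfl (fun i hi => by rw [(Finset.mem_filter.mp hi).2] :
        ∀ i ∈ P, μ i + t = c + t), Finset.prod_const]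
    have e2 : ∏ i ∈ Finset.univ.filter (fun i => ¬ μ i = c), (μ i + t)
        = t ^ (Finset.univ.filter (fun i => ¬ μ i = c)).card := by
      rw [Finset.prod_congr rfl (fun i hi => by
        rw [(hq i).resolve_right (Finset.mem_filter.mp hi).2, zero_add] :
        ∀ i ∈ Finset.univ.filter (fun i => ¬ μ i = c), μ i + t = t), Finset.prod_const]
    rw [e1, e2, hm]
    congr 2
    have h2 := Finset.card_filter_add_card_filter_not (s := Finset.univ)
      (p := fun i => μ i = c)
    rw [Finset.card_univ] at h2
    rw [← hP, hm] at h2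
    omega
  rw [hdet, hprod]

end Spectral


section CauchyBinet

variable {ι κ : Type*} [Fintype ι] [DecidableEq ι] [Fintype κ] [DecidableEq κ]

lemma det_MDMt_expand (M : Matrix ι κ ℝ) (D : κ → ℝ) :
    (M * Matrix.diagonal D * Mᵀ).det
      = ∑ r : ι → κ, (∏ i, (M i (r i) * D (r i))) * ((Mᵀ).submatrix r id).det := by
  have h1 : M * Matrix.diagonal D * Mᵀ
      = Matrix.of (fun i => ∑ j : κ, (M i j * D j) • (fun i' => M i' j)) := by
    ext i i'
    simp only [Matrix.mul_apply, Matrix.diagonal_apply, Matrix.of_apply, Finset.sum_apply,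
      Pi.smul_apply, Matrix.transpose_apply, smul_eq_mul, ite_mul, zero_mul, mul_ite, mul_zero,
      Finset.sum_ite_eq, Finset.sum_ite_eq', Finset.mem_univ, ite_true]
  rw [h1]
  have h3 := MultilinearMap.map_sum
    (Matrix.detRowAlternating (R := ℝ) (n := ι)).toMultilinearMap
    (g := fun (i : ι) (j : κ) => (M i j * D j) • (fun i' => M i' j))
  have h4 : ∀ r : ι → κ,
      (Matrix.detRowAlternating (R := ℝ) (n := ι)).toMultilinearMap
        (fun i => (M i (r i) * D (r i)) • (fun i' => M i' (r i)))
      = (∏ i, (M i (r i) * D (r i))) * ((Mᵀ).submatrix r id).det := by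
    intro r
    rw [MultilinearMap.map_smul_univ]
    rfl
  calc (Matrix.of (fun i => ∑ j : κ, (M i j * D j) • (fun i' => M i' j))).det
      = (Matrix.detRowAlternating (R := ℝ) (n := ι)).toMultilinearMap
          (fun i => ∑ j : κ, (M i j * D j) • (fun i' => M i' j)) := rfl
    _ = ∑ r : ι → κ, (Matrix.detRowAlternating (R := ℝ) (n := ι)).toMultilinearMap
          (fun i => (M i (r i) * D (r i)) • (fun i' => M i' (r i))) := h3
    _ = ∑ r : ι → κ, (∏ i, (M i (r i) * D (r i))) * ((Mᵀ).submatrix r id).det :=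
        Finset.sum_congr rfl (fun r _ => h4 r)

lemma det_submatrix_zero_of_not_inj (M : Matrix ι κ ℝ) {r : ι → κ}
    (hr : ¬ Function.Injective r) : ((Mᵀ).submatrix r id).det = 0 := by
  rw [Function.not_injective_iff] at hr
  obtain ⟨i, i', h1, h2⟩ := hr
  exact Matrix.det_zero_of_row_eq h2 (by
    funext w
    simp only [Matrix.submatrix_apply, Matrix.transpose_apply, h1])

set_option maxHeartbeats 1000000 in
theorem cauchy_binet (M : Matrix ι κ ℝ) (D : κ → ℝ) :
    (M * Matrix.diagonal D * Mᵀ).det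
      = ∑ T ∈ Finset.univ.filter (fun T : Finset κ => T.card = Fintype.card ι),
          detSq (colSub M T) * ∏ τ ∈ T, D τ := by
  classical
  rw [det_MDMt_expand]
  -- drop non-injective r
  rw [← Finset.sum_filter_of_ne (p := fun r : ι → κ => Function.Injective r)
    (fun r _ hne => by
      by_contra h
      exact hne (by rw [det_submatrix_zero_of_not_inj M h, mul_zero]))]
  -- group by image
  rw [← Finset.sum_fiberwise_of_maps_to (g := fun r : ι → κ => Finset.image r Finset.univ)
    (t := Finset.univ.filter (fun T : Finset κ => T.card = Fintype.card ι))
    (fun r hr => by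
      rw [Finset.mem_filter] at hr ⊢
      exact ⟨Finset.mem_univ _,
        by rw [Finset.card_image_of_injective _ hr.2, Finset.card_univ]⟩)]
  refine Finset.sum_congr rfl (fun T hT => ?_)
  rw [Finset.mem_filter] at hT
  have hTc := hT.2
  have hcard : Fintype.card ι = Fintype.card {τ // τ ∈ T} := by
    rw [Fintype.card_coe, hTc]
  have hne : Nonempty (ι ≃ {τ // τ ∈ T}) := ⟨Fintype.equivOfCardEq hcard⟩
  -- rewrite detSq
  have hdetSq : detSq (colSub M T)
      = (((colSub M T).submatrix id hne.some).det) ^ 2 := by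
    rw [detSq, dif_pos hne]
  set e : ι ≃ {τ // τ ∈ T} := hne.some with he
  -- inner sum over functions into the subtype
  have hstep1 : ∑ r ∈ (Finset.univ.filter (fun r : ι → κ => Function.Injective r)).filter
        (fun r => Finset.image r Finset.univ = T),
        (∏ i, (M i (r i) * D (r i))) * ((Mᵀ).submatrix r id).det
      = ∑ f : ι → {τ // τ ∈ T},
        (∏ i, ((colSub M T) i (f i) * D (f i).1)) * (((colSub M T)ᵀ).submatrix f id).det := by
    rw [← Finset.sum_filter_of_ne (s := Finset.univ)
      (p := fun f : ι → {τ // τ ∈ T} => Function.Injective f)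
      (fun f _ hne' => by
        by_contra h
        exact hne' (by rw [det_submatrix_zero_of_not_inj (colSub M T) h, mul_zero]))]
    refine Finset.sum_bij (fun (f : ι → {τ // τ ∈ T}) (hf : f ∈ Finset.univ.filter
        (fun f : ι → {τ // τ ∈ T} => Function.Injective f)) => (fun i => (f i).1)) ?_ ?_ ?_ ?_
      |>.symm
    · intro f hf
      rw [Finset.mem_filter] at hf ⊢
      have hinj : Function.Injective (fun i => (f i).1) :=
        fun i i' h => hf.2 (Subtype.ext h)
      refine ⟨Finset.mem_filter.mpr ⟨Finset.mem_univ _, hinj⟩, ?_⟩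
      apply Finset.eq_of_subset_of_card_le
      · intro τ hτ
        obtain ⟨i, _, rfl⟩ := Finset.mem_image.mp hτ
        exact (f i).2
      · rw [Finset.card_image_of_injective _ hinj, Finset.card_univ, hTc]
    · intro f hf f' hf' h
      funext i
      exact Subtype.ext (congrFun h i)
    · intro r hr
      rw [Finset.mem_filter, Finset.mem_filter] at hr
      have hmem : ∀ i, r i ∈ T := fun i =>
        hr.2 ▸ Finset.mem_image_of_mem r (Finset.mem_univ i)
      refine ⟨fun i => ⟨r i, hmem i⟩, Finset.mem_filter.mpr ⟨Finset.mem_univ _, ?_⟩, rfl⟩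
      intro i i' h
      exact hr.1.2 (congrArg Subtype.val h)
    · intro f hf
      rfl
  rw [hstep1]
  -- reverse the expansion for the column-restricted matrix
  have hstep2 : ∑ f : ι → {τ // τ ∈ T},
        (∏ i, ((colSub M T) i (f i) * D (f i).1)) * (((colSub M T)ᵀ).submatrix f id).det
      = (colSub M T * Matrix.diagonal (fun t : {τ // τ ∈ T} => D t.1)
          * (colSub M T)ᵀ).det := (det_MDMt_expand (colSub M T) (fun t => D t.1)).symm
  rw [hstep2]
  -- compute the square determinant via the equivalence e
  have hsub : colSub M T * Matrix.diagonal (fun t : {τ // τ ∈ T} => D t.1) * (colSub M T)ᵀ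
      = ((colSub M T).submatrix id e)
        * Matrix.diagonal (fun i => D (e i).1)
        * ((colSub M T).submatrix id e)ᵀ := by
    rw [show Matrix.diagonal (fun i : ι => D (e i).1)
        = (Matrix.diagonal (fun t : {τ // τ ∈ T} => D t.1)).submatrix e e from by
      rw [Matrix.submatrix_diagonal_equiv]; rfl]
    rw [Matrix.transpose_submatrix, Matrix.submatrix_mul_equiv, Matrix.submatrix_mul_equiv]
    rfl
  rw [hsub, Matrix.det_mul, Matrix.det_mul, Matrix.det_transpose, Matrix.det_diagonal, hdetSq]
  have hprodD : ∏ i : ι, D (e i).1 = ∏ τ ∈ T, D τ := by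
    rw [← Finset.prod_coe_sort T D]
    exact Equiv.prod_comp e (fun t => D t.1)
  rw [hprodD]
  ring

end CauchyBinet


section Split

variable {n j : ℕ} {x : Fin n → ℝ}

lemma sum_face (m : ℕ) (f : Finset (Fin n) → ℝ) :
    ∑ τ : Face n m, f τ.1 = ∑ s ∈ (Finset.univ : Finset (Fin n)).powersetCard m, f s :=
  (Finset.sum_subtype _ (fun s => Finset.mem_powersetCard_univ) f).symm

lemma filter_not_mem_eq_hf (hn2 : 2 ≤ n) (m : ℕ) :
    ((Finset.univ : Finset (Fin n)).powersetCard m).filter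
      (fun s => (⟨n-1, by omega⟩ : Fin n) ∉ s) = hf n m := by
  ext s
  simp only [mem_filter, Finset.mem_powersetCard_univ, mem_hf]
  constructor
  · rintro ⟨hc, hl⟩
    refine ⟨hc, fun a ha => ?_⟩
    have h1 := a.isLt
    have h2 : a ≠ ⟨n-1, by omega⟩ := fun h => hl (h ▸ ha)
    have h3 : (a : ℕ) ≠ n - 1 := fun h => h2 (Fin.ext h)
    omega
  · rintro ⟨hc, hve⟩
    refine ⟨hc, fun hl => ?_⟩
    have := hve _ hl
    simp only [] at this
    omega

lemma lnotmem (hn2 : 2 ≤ n) {m : ℕ} (σ : HFace n m) :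
    (⟨n-1, by omega⟩ : Fin n) ∉ σ.1 := fun h => by
  have := σ.2.2 _ h
  simp only [] at this
  omega

lemma wt_sq (s : Finset (Fin n)) : ∏ i ∈ s, x i ^ 2 = (wt x s) ^ 2 := by
  rw [wt, Finset.prod_pow]

lemma split_eq (hx : ∀ i, x i ≠ 0) (hn2 : 2 ≤ n) :
    bdryHat n (j+1) * Matrix.diagonal (fun τ : Face n (j+2) => ∏ i ∈ τ.1, x i ^ 2)
      * (bdryHat n (j+1))ᵀ
    = Matrix.diagonal (fun σ : HFace n (j+1) => wt x σ.1)
      * (NU n j x * (NU n j x)ᵀ + ((x ⟨n-1, by omega⟩) ^ 2) • 1)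
      * Matrix.diagonal (fun σ : HFace n (j+1) => wt x σ.1) := by
  ext σ σ'
  have hσc : σ.1.card = j + 1 := σ.2.1
  have hσ'c : σ'.1.card = j + 1 := σ'.2.1
  set ℓ : Fin n := ⟨n-1, by omega⟩ with hℓ
  -- RHS entry
  have hrhs : ((Matrix.diagonal (fun σ : HFace n (j+1) => wt x σ.1)
      * (NU n j x * (NU n j x)ᵀ + ((x ℓ) ^ 2) • (1 : Matrix (HFace n (j+1)) (HFace n (j+1)) ℝ))
      * Matrix.diagonal (fun σ : HFace n (j+1) => wt x σ.1)) : Matrix (HFace n (j+1)) (HFace n (j+1)) ℝ) σ σ'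
      = wt x σ.1 * ((NU n j x * (NU n j x)ᵀ) σ σ'
          + (x ℓ)^2 * (if σ = σ' then 1 else 0)) * wt x σ'.1 := by
    rcases eq_or_ne σ σ' with h | h
    · subst h
      rw [Matrix.mul_diagonal, Matrix.diagonal_mul, Matrix.add_apply, Matrix.smul_apply,
        Matrix.one_apply_eq, if_pos rfl, smul_eq_mul]
    · rw [Matrix.mul_diagonal, Matrix.diagonal_mul, Matrix.add_apply, Matrix.smul_apply,
        Matrix.one_apply_ne h, if_neg h, smul_eq_mul]
  rw [hrhs]
  -- LHS entry
  have hlhs : (bdryHat n (j+1) * Matrix.diagonal (fun τ : Face n (j+2) => ∏ i ∈ τ.1, x i ^ 2)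
      * (bdryHat n (j+1))ᵀ) σ σ'
      = ∑ τ : Face n (j+2), ent σ.1 τ.1 * (∏ i ∈ τ.1, x i ^ 2) * ent σ'.1 τ.1 := by
    simp only [Matrix.mul_apply, Matrix.diagonal_apply, Matrix.transpose_apply, mul_ite, mul_zero,
      ite_mul, zero_mul, Finset.sum_ite_eq, Finset.sum_ite_eq', Finset.mem_univ, ite_true]
    rfl
  rw [hlhs]
  rw [sum_face (j+2) (fun s => ent σ.1 s * (∏ i ∈ s, x i ^ 2) * ent σ'.1 s),
    ← Finset.sum_filter_add_sum_filter_not _ (fun s => ℓ ∈ s)]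
  have hB : ∑ s ∈ ((Finset.univ : Finset (Fin n)).powersetCard (j+2)).filter (fun s => ℓ ∈ s),
      ent σ.1 s * (∏ i ∈ s, x i ^ 2) * ent σ'.1 s
      = (x ℓ)^2 * wt x σ.1 * wt x σ'.1 * (if σ = σ' then 1 else 0) := by
    rcases eq_or_ne σ σ' with h | h
    · subst h
      rw [if_pos rfl, mul_one]
      have hmem : insert ℓ σ.1 ∈ ((Finset.univ : Finset (Fin n)).powersetCard (j+2)).filter
          (fun s => ℓ ∈ s) := by
        rw [mem_filter, Finset.mem_powersetCard_univ]
        exact ⟨by rw [card_insert_of_notMem (lnotmem hn2 σ), hσc], mem_insert_self _ _⟩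
      rw [Finset.sum_eq_single_of_mem _ hmem]
      · have h1 : ent σ.1 (insert ℓ σ.1) * (∏ i ∈ insert ℓ σ.1, x i ^ 2)
            * ent σ.1 (insert ℓ σ.1)
            = (ent σ.1 (insert ℓ σ.1) * ent σ.1 (insert ℓ σ.1)) * ∏ i ∈ insert ℓ σ.1, x i ^ 2 :=
          by ring
        rw [h1, ent_mul_self (by rw [card_insert_of_notMem (lnotmem hn2 σ), hσc]),
          if_pos (subset_insert _ _), one_mul, Finset.prod_insert (lnotmem hn2 σ), wt_sq, wt]
        ring
      · intro s hs hne
        rw [mem_filter, Finset.mem_powersetCard_univ] at hs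
        by_cases hsub : σ.1 ⊆ s
        · exfalso
          apply hne
          apply (eq_of_subset_of_card_le (insert_subset hs.2 hsub) ?_).symm
          rw [hs.1, card_insert_of_notMem (lnotmem hn2 σ), hσc]
        · rw [ent_eq_zero hsub, zero_mul, zero_mul]
    · rw [if_neg h, mul_zero]
      apply Finset.sum_eq_zero
      intro s hs
      rw [mem_filter, Finset.mem_powersetCard_univ] at hs
      by_cases hsub : σ.1 ⊆ s
      · by_cases hsub' : σ'.1 ⊆ s
        · exfalso
          have e1 : s = insert ℓ σ.1 :=
            (eq_of_subset_of_card_le (insert_subset hs.2 hsub)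
              (by rw [hs.1, card_insert_of_notMem (lnotmem hn2 σ), hσc])).symm
          have e2 : s = insert ℓ σ'.1 :=
            (eq_of_subset_of_card_le (insert_subset hs.2 hsub')
              (by rw [hs.1, card_insert_of_notMem (lnotmem hn2 σ'), hσ'c])).symm
          apply h
          apply Subtype.ext
          have e3 : insert ℓ σ.1 = insert ℓ σ'.1 := e1 ▸ e2
          have e4 := congrArg (fun t => Finset.erase t ℓ) e3
          exact (erase_insert (lnotmem hn2 σ)).symm.trans (e4.trans (erase_insert (lnotmem hn2 σ')))
        · rw [ent_eq_zero hsub', mul_zero]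
      · rw [ent_eq_zero hsub, zero_mul, zero_mul]
  have hA : ∑ s ∈ ((Finset.univ : Finset (Fin n)).powersetCard (j+2)).filter (fun s => ℓ ∉ s),
      ent σ.1 s * (∏ i ∈ s, x i ^ 2) * ent σ'.1 s
      = wt x σ.1 * (NU n j x * (NU n j x)ᵀ) σ σ' * wt x σ'.1 := by
    rw [filter_not_mem_eq_hf hn2 (j+2)]
    have h1 : (NU n j x * (NU n j x)ᵀ) σ σ'
        = ∑ s ∈ hf n (j+2), nent x σ.1 s * nent x σ'.1 s := by
      simp only [Matrix.mul_apply, Matrix.transpose_apply, NU]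
      rw [sum_hface (n := n) (j+2) (fun s => nent x σ.1 s * nent x σ'.1 s)]
    rw [h1, Finset.mul_sum, Finset.sum_mul]
    refine Finset.sum_congr rfl (fun s hs => ?_)
    rw [nent, nent, wt_sq]
    field_simp [wt_ne hx]
  rw [hA, hB]
  rcases eq_or_ne σ σ' with h | h
  · simp only [if_pos h]; ring
  · simp only [if_neg h]; ring

end Split


section Main

variable {n j : ℕ} {x : Fin n → ℝ}

lemma Av_eq (hn1 : 1 ≤ n) : Av n = Finset.univ.erase (⟨n-1, by omega⟩ : Fin n) := by
  ext i
  simp only [Av, mem_filter, mem_univ, true_and, mem_erase, and_true, ← Fin.val_ne_iff]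
  have h1 := i.isLt
  have h2 : ((⟨n-1, by omega⟩ : Fin n) : ℕ) = n - 1 := rfl
  omega

lemma pascal_nm (hn2 : 2 ≤ n) (j : ℕ) :
    (n-1).choose (j+1) = (n-2).choose (j+1) + (n-2).choose j := by
  obtain ⟨m, rfl⟩ : ∃ m, n = m + 2 := ⟨n - 2, by omega⟩
  simp only [Nat.add_sub_cancel, show m + 2 - 1 = m + 1 from rfl]
  rw [Nat.choose_succ_succ]
  simp only [Nat.succ_eq_add_one]
  omega

lemma prod_wt_sq (hn2 : 2 ≤ n) :
    ∏ σ : HFace n (j+1), (wt x σ.1) ^ 2 = ∏ a ∈ Av n, (x a ^ 2) ^ ((n-2).choose j) := by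
  have h1 : ∀ σ : HFace n (j+1), (wt x σ.1) ^ 2 = ∏ i ∈ σ.1, x i ^ 2 :=
    fun σ => (wt_sq _).symm
  rw [Finset.prod_congr rfl (fun σ _ => h1 σ),
    prod_hface (n := n) (j+1) (fun s => ∏ i ∈ s, x i ^ 2)]
  have h2 : ∀ s ∈ hf n (j+1), ∏ i ∈ s, x i ^ 2
      = ∏ a ∈ Av n, (if a ∈ s then x a ^ 2 else 1) := by
    intro s hs
    rw [Finset.prod_ite_mem (Av n) s (fun a => x a ^ 2),
      Finset.inter_eq_right.mpr (subset_Av hs)]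
  rw [Finset.prod_congr rfl h2, Finset.prod_comm]
  refine Finset.prod_congr rfl (fun a ha => ?_)
  rw [Finset.prod_ite, Finset.prod_const, Finset.prod_const, one_pow, mul_one,
    count_mem_hf hn2 ha]

lemma det_bdryHat (hx : ∀ i, x i ≠ 0) (hn2 : 2 ≤ n) :
    (bdryHat n (j+1) * Matrix.diagonal (fun τ : Face n (j+2) => ∏ i ∈ τ.1, x i ^ 2)
      * (bdryHat n (j+1))ᵀ).det
    = (∑ i, x i ^ 2) ^ ((n-2).choose (j+1)) * ∏ i, (x i ^ 2) ^ ((n-2).choose j) := by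
  have hS'pos : 0 < ∑ a ∈ Av n, x a ^ 2 := by
    refine Finset.sum_pos (fun a _ => lt_of_le_of_ne (sq_nonneg _)
      (Ne.symm (pow_ne_zero 2 (hx a)))) ⟨⟨0, by omega⟩, ?_⟩
    rw [Av, mem_filter]
    exact ⟨mem_univ _, show (0 : ℕ) < n - 1 by omega⟩
  have hherm : (NU n j x * (NU n j x)ᵀ).IsHermitian := by
    have h := Matrix.isHermitian_mul_conjTranspose_self (NU n j x)
    rwa [Matrix.conjTranspose_eq_transpose_of_trivial] at h
  have hdet1 := det_add_smul_one hherm (MA_sq hx) (ne_of_gt hS'pos) (trace_MA hx hn2)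
    ((x (⟨n-1, by omega⟩ : Fin n)) ^ 2)
  rw [split_eq hx hn2, Matrix.det_mul, Matrix.det_mul, Matrix.det_diagonal, hdet1,
    card_hface (by omega) (j+1)]
  have hexp : (n-1).choose (j+1) - (n-2).choose (j+1) = (n-2).choose j := by
    have := pascal_nm hn2 j
    omega
  have hsum : (∑ a ∈ Av n, x a ^ 2) + (x (⟨n-1, by omega⟩ : Fin n)) ^ 2 = ∑ i, x i ^ 2 := by
    rw [Av_eq (by omega)]
    exact Finset.sum_erase_add _ _ (mem_univ _)
  rw [hexp]
  have hprod : (∏ σ : HFace n (j+1), wt x σ.1) * (∏ σ : HFace n (j+1), wt x σ.1)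
      * ((x (⟨n-1, by omega⟩ : Fin n)) ^ 2) ^ ((n-2).choose j)
      = ∏ i, (x i ^ 2) ^ ((n-2).choose j) := by
    rw [← Finset.prod_mul_distrib]
    have h1 : ∀ σ : HFace n (j+1), wt x σ.1 * wt x σ.1 = (wt x σ.1) ^ 2 :=
      fun σ => (pow_two _).symm
    rw [Finset.prod_congr rfl (fun σ _ => h1 σ), prod_wt_sq hn2, Av_eq (by omega)]
    exact Finset.prod_erase_mul _ _ (mem_univ _)
  calc (∏ σ : HFace n (j+1), wt x σ.1)
        * (((∑ a ∈ Av n, x a ^ 2) + x (⟨n-1, by omega⟩ : Fin n) ^ 2) ^ ((n-2).choose (j+1))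
          * (x (⟨n-1, by omega⟩ : Fin n) ^ 2) ^ ((n-2).choose j))
        * (∏ σ : HFace n (j+1), wt x σ.1)
      = ((∑ a ∈ Av n, x a ^ 2) + x (⟨n-1, by omega⟩ : Fin n) ^ 2) ^ ((n-2).choose (j+1))
        * ((∏ σ : HFace n (j+1), wt x σ.1) * (∏ σ : HFace n (j+1), wt x σ.1)
          * (x (⟨n-1, by omega⟩ : Fin n) ^ 2) ^ ((n-2).choose j)) := by ring
    _ = _ := by rw [hprod, hsum]

lemma prod_deg {k : ℕ} (T : Finset (Face n (k+1))) :
    ∏ τ ∈ T, ∏ i ∈ τ.1, x i ^ 2 = ∏ i, (x i ^ 2) ^ (deg n k T i) := by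
  have h1 : ∀ τ ∈ T, ∏ i ∈ τ.1, x i ^ 2
      = ∏ i : Fin n, (if i ∈ τ.1 then x i ^ 2 else 1) := by
    intro τ _
    rw [Finset.prod_ite_mem Finset.univ τ.1 (fun i => x i ^ 2), Finset.univ_inter]
  rw [Finset.prod_congr rfl h1, Finset.prod_comm]
  refine Finset.prod_congr rfl (fun i _ => ?_)
  rw [Finset.prod_ite, Finset.prod_const, Finset.prod_const, one_pow, mul_one, deg]

lemma genfunc_nonzero (hk1 : 2 ≤ n) (hx : ∀ i, x i ≠ 0) :
    ∑ T ∈ Finset.univ.filter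
        (fun T : Finset (Face n (j+2)) => T.card = (n-1).choose (j+1)),
        detSq (colSub (bdryHat n (j+1)) T) * ∏ i, (x i ^ 2) ^ (deg n (j+1) T i)
      = (∑ i, x i ^ 2) ^ ((n-2).choose (j+1)) *
          ∏ i, (x i ^ 2) ^ ((n-2).choose j) := by
  have hcb := cauchy_binet (bdryHat n (j+1))
    (fun τ : Face n (j+2) => ∏ i ∈ τ.1, x i ^ 2)
  rw [det_bdryHat hx hk1] at hcb
  rw [← hcb.symm] at *
  rw [← hcb]
  refine (Finset.sum_congr ?_ ?_).symm
  · congr 1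
    funext T
    rw [card_hface (by omega : 1 ≤ n) (j+1)]
  · intro T _
    rw [prod_deg T]

end Main


lemma dense_nonzero {n : ℕ} : Dense {y : Fin n → ℝ | ∀ i, y i ≠ 0} := by
  intro y
  have hu : Filter.Tendsto (fun m : ℕ => fun i => if y i = 0 then 1/((m:ℝ)+1) else y i)
      Filter.atTop (nhds y) := by
    rw [tendsto_pi_nhds]
    intro i
    by_cases h : y i = 0
    · simp only [if_pos h]
      rw [h]
      exact tendsto_one_div_add_atTop_nhds_zero_nat
    · simp only [if_neg h]
      exact tendsto_const_nhds
  refine mem_closure_of_tendsto hu (Filter.Eventually.of_forall (fun m => ?_))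
  intro i
  by_cases h : y i = 0
  · simp only [if_pos h]
    positivity
  · simp only [if_neg h]
    exact h

end Kalai

open Kalai in
/-- Kalai's generating function theorem: for every `x ∈ ℝⁿ`,
`Σ_{T : |T| = m₃} det(∂̂_{•,T})² ∏ᵢ (xᵢ²)^{dᵢ(T)} = (Σᵢ xᵢ²)^{m₂} ∏ᵢ (xᵢ²)^{m₁}`. -/
theorem genfunc (n k : ℕ) (hk : 1 ≤ k) (hn : k < n) (x : Fin n → ℝ) :
    ∑ T ∈ Finset.univ.filter
        (fun T : Finset (Face n (k+1)) => T.card = (n-1).choose k),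
        detSq (colSub (bdryHat n k) T) * ∏ i, (x i ^ 2) ^ (deg n k T i)
      = (∑ i, x i ^ 2) ^ ((n-2).choose k) *
          ∏ i, (x i ^ 2) ^ ((n-2).choose (k-1)) := by
  obtain ⟨j, rfl⟩ : ∃ j, k = j + 1 := ⟨k - 1, by omega⟩
  have hn2 : 2 ≤ n := by omega
  set F : (Fin n → ℝ) → ℝ := fun y =>
    ∑ T ∈ Finset.univ.filter
        (fun T : Finset (Face n (j+1+1)) => T.card = (n-1).choose (j+1)),
        detSq (colSub (bdryHat n (j+1)) T) * ∏ i, (y i ^ 2) ^ (deg n (j+1) T i) with hF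
  set G : (Fin n → ℝ) → ℝ := fun y =>
    (∑ i, y i ^ 2) ^ ((n-2).choose (j+1)) *
      ∏ i, (y i ^ 2) ^ ((n-2).choose (j+1-1)) with hG
  show F x = G x
  suffices h : F = G by rw [h]
  have hFc : Continuous F := by
    apply continuous_finset_sum
    intro T _
    apply Continuous.mul continuous_const
    apply continuous_finset_prod
    intro i _
    exact ((continuous_apply i).pow 2).pow _
  have hGc : Continuous G := by
    apply Continuous.mul
    · exact (continuous_finset_sum _ (fun i _ => (continuous_apply i).pow 2)).pow _
    · exact continuous_finset_prod _ (fun i _ => ((continuous_apply i).pow 2).pow _)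
  apply Continuous.ext_on dense_nonzero hFc hGc
  intro y hy
  have h1 := genfunc_nonzero (n := n) (j := j) (x := y) hn2 hy
  simp only [hF, hG, Nat.add_sub_cancel]
  exact h1
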